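/- Let X be a nonempty convex subset of a real inner product space (e.g. ℝ^m), let σ > 0, and let h be a real-valued function that is differentiable with gradient ∇h on an open set containing X and is σ-strongly convex on X, i.e. h(x') ≥ h(x) + ⟨∇h(x), x' − x⟩ + (σ/2)‖x' − x‖² for all x, x' ∈ X. Define the Bregman divergence D(p, x) = h(p) − h(x) − ⟨∇h(x), p − x⟩ for p, x ∈ X. Let x, p ∈ X, let y be a vector, and let x⁺ ∈ X be a minimizer over x' ∈ X of the map x' ↦ ⟨y, x − x'⟩ + D(x', x). Then: (i) D(p, x) ≥ (σ/2)‖p − x‖²; and (ii) D(p, x⁺) ≤ D(p, x) − D(x⁺, x) + ⟨y, x⁺ − p⟩ ≤ D(p, x) + ⟨y, x − p⟩ + (1/(2σ))‖y‖². -/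

import Mathlib

open scoped RealInnerProductSpace

/-- Proposition 1: upper and lower Bregman-divergence bounds for the mirror/prox step. Let `h`
be differentiable with gradient `h'` on an open set containing the convex set `X` and
`σ`-strongly convex on `X`, let `D p x = h p - h x - ⟪h' x, p - x⟫` be the associated Bregman
divergence, and let `x⁺ ∈ X` minimize `x' ↦ ⟪y, x - x'⟫ + D x' x` over `X`. Then
`D p x ≥ (σ/2)‖p - x‖²` and
`D p x⁺ ≤ D p x - D x⁺ x + ⟪y, x⁺ - p⟫ ≤ D p x + ⟪y, x - p⟫ + ‖y‖²/(2σ)`. -/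
theorem bregman_divergence_bounds {E : Type*} [NormedAddCommGroup E] [InnerProductSpace ℝ E] [CompleteSpace E]
    (X : Set E) (hXne : X.Nonempty) (hXconv : Convex ℝ X)
    (σ : ℝ) (hσ : 0 < σ)
    (h : E → ℝ) (h' : E → E) (U : Set E) (hU : IsOpen U) (hXU : X ⊆ U)
    (hgrad : ∀ z ∈ U, HasGradientAt h (h' z) z)
    (hstrong : ∀ x ∈ X, ∀ x' ∈ X,
      h x + ⟪h' x, x' - x⟫ + σ / 2 * ‖x' - x‖ ^ 2 ≤ h x')
    (D : E → E → ℝ)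
    (hD : ∀ p x, D p x = h p - h x - ⟪h' x, p - x⟫)
    (x p : E) (hx : x ∈ X) (hp : p ∈ X) (y : E) (xplus : E) (hxplusX : xplus ∈ X)
    (hxplusmin : ∀ x' ∈ X, ⟪y, x - xplus⟫ + D xplus x ≤ ⟪y, x - x'⟫ + D x' x) :
    σ / 2 * ‖p - x‖ ^ 2 ≤ D p x ∧
      D p xplus ≤ D p x - D xplus x + ⟪y, xplus - p⟫ ∧
      D p x - D xplus x + ⟪y, xplus - p⟫ ≤ D p x + ⟪y, x - p⟫ + 1 / (2 * σ) * ‖y‖ ^ 2 := by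
  -- Part (i), in general form
  have lower : ∀ a ∈ X, ∀ b ∈ X, σ / 2 * ‖b - a‖ ^ 2 ≤ D b a := by
    intro a ha b hb
    have := hstrong a ha b hb
    rw [hD]
    linarith
  refine ⟨lower x hx p hp, ?_, ?_⟩
  · -- first-order optimality: 0 ≤ ⟪h' xplus - h' x - y, p - xplus⟫
    set φ : E → ℝ := fun z => ⟪y, x - z⟫ + D z x with hφ
    have hmin : IsMinOn φ X xplus := by
      intro z hz
      exact hxplusmin z hz
    have hg : HasFDerivAt φ
        (((InnerProductSpace.toDual ℝ E) (h' xplus)) - innerSL ℝ y - innerSL ℝ (h' x)) xplus := by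
      have h1 : HasFDerivAt (fun z : E => ⟪y, x - z⟫) (-(innerSL ℝ y)) xplus := by
        have : HasFDerivAt (fun z : E => ⟪y, z⟫) (innerSL ℝ y) xplus :=
          (innerSL ℝ y).hasFDerivAt
        simpa [inner_sub_right, inner_add_right, inner_neg_right, sub_eq_add_neg] using
          (this.neg.const_add (⟪y, x⟫ : ℝ))
      have h2 : HasFDerivAt h ((InnerProductSpace.toDual ℝ E) (h' xplus)) xplus :=
        hgrad xplus (hXU hxplusX)
      have h3 : HasFDerivAt (fun z : E => ⟪h' x, z - x⟫) (innerSL ℝ (h' x)) xplus := by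
        have : HasFDerivAt (fun z : E => ⟪h' x, z⟫) (innerSL ℝ (h' x)) xplus :=
          (innerSL ℝ (h' x)).hasFDerivAt
        simpa [inner_sub_right, inner_add_right, inner_neg_right, sub_eq_add_neg] using
          (this.add_const (-⟪h' x, x⟫ : ℝ))
      have := ((h1.add h2).sub (h3.add_const (h x)))
      have heq : φ = fun z => (⟪y, x - z⟫ + h z) - (⟪h' x, z - x⟫ + h x) := by
        funext z; simp [hφ, hD]; ring
      rw [heq]
      refine this.congr_fderiv ?_
      ext v
      simp
      ring
    have hcone : p - xplus ∈ posTangentConeAt X xplus :=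
      sub_mem_posTangentConeAt_of_segment_subset (hXconv.segment_subset hxplusX hp)
    have hopt := (hmin.localize).hasFDerivWithinAt_nonneg (hg.hasFDerivWithinAt) hcone
    simp only [ContinuousLinearMap.sub_apply, InnerProductSpace.toDual_apply_apply,
      innerSL_apply_apply] at hopt
    -- three-point identity
    have key : D p x - D xplus x - D p xplus = ⟪h' xplus - h' x, p - xplus⟫ := by
      simp only [hD, inner_sub_left, inner_sub_right]
      ring
    rw [inner_sub_left, inner_sub_right] at key
    rw [inner_sub_right]
    rw [inner_sub_right, inner_sub_right] at hopt
    linarith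
  · have h1 := lower x hx xplus hxplusX
    have h2 : ⟪y, xplus - x⟫ ≤ ‖y‖ * ‖xplus - x‖ := real_inner_le_norm _ _
    have h3 : ‖y‖ * ‖xplus - x‖ ≤ σ / 2 * ‖xplus - x‖ ^ 2 + 1 / (2 * σ) * ‖y‖ ^ 2 := by
      have hsq := sq_nonneg (σ * ‖xplus - x‖ - ‖y‖)
      have h2σ : (0:ℝ) < 2 * σ := by positivity
      rw [show σ / 2 * ‖xplus - x‖ ^ 2 + 1 / (2 * σ) * ‖y‖ ^ 2
          = (σ ^ 2 * ‖xplus - x‖ ^ 2 + ‖y‖ ^ 2) / (2 * σ) from by field_simp,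
        le_div_iff₀ h2σ]
      nlinarith
    have h4 : ⟪y, xplus - p⟫ = ⟪y, xplus - x⟫ + ⟪y, x - p⟫ := by
      rw [inner_sub_right, inner_sub_right, inner_sub_right]; ring
    linarith
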